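/- If a nonempty subset X ⊆ T is dominant with respect to a nonempty subset C ⊆ I, then X = { min_i X : i ∈ C }. -/
import Mathlib


/-- `X ⊆ T` is dominant with respect to `C ⊆ I` (for the family of linear orders `o`)
if either `X = ∅`, or `X ≠ ∅` and there is no `y : T` with `min_i X <_i y` for all `i ∈ C`. -/
def Dominant {T I : Type*} (o : I → LinearOrder T) (X : Finset T) (C : Finset I) : Prop :=
  ∀ hX : X.Nonempty, ¬ ∃ y : T, ∀ i ∈ C, (o i).lt (@Finset.min' T (o i) X hX) y

/-- If a nonempty `X ⊆ T` is dominant with respect to a nonempty `C ⊆ I`,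
then `X = { min_i X : i ∈ C }`. -/
theorem stmt1 {T I : Type*} [Fintype T] [Fintype I] [Nonempty T] [Nonempty I]
    [DecidableEq T] [DecidableEq I] (o : I → LinearOrder T)
    (X : Finset T) (C : Finset I) (hX : X.Nonempty) (hC : C.Nonempty)
    (hdom : Dominant o X C) :
    X = C.image (fun i => @Finset.min' T (o i) X hX) := by
  apply Finset.Subset.antisymm
  · intro x hx
    by_contra hmem
    simp only [Finset.mem_image, not_exists, not_and] at hmem
    exact hdom hX ⟨x, fun i hi => by
      letI := o i
      have hle := @Finset.min'_le T (o i) X x hx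
      have hne : @Finset.min' T (o i) X hX ≠ x := fun h => hmem i hi h
      exact lt_of_le_of_ne hle hne⟩
  · intro x hx
    simp only [Finset.mem_image] at hx
    obtain ⟨i, _, rfl⟩ := hx
    exact @Finset.min'_mem T (o i) X hX
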